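/- Let G be a graph explainable with respect to the exactly-2-relation by a tree with non-negative integer weights in which all pairs of distinct leaves have positive distance. Then G contains no induced C_4 and no induced K_4 − e; consequently G is chordal. -/

import Mathlib

open SimpleGraph

noncomputable def treePath {V : Type} (T : SimpleGraph V) (hT : T.IsTree) (x y : V) :
    T.Walk x y := (hT.existsUnique_path x y).choose

/-- The weighted distance between two vertices of a tree: the sum of the weights
`lam` over the edges of the unique path. -/
noncomputable def treeDist {V : Type} (T : SimpleGraph V) (hT : T.IsTree)
    (lam : Sym2 V → ℕ) (x y : V) : ℕ :=
  ((treePath T hT x y).edges.map lam).sum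

/-- A leaf of a tree: a vertex of degree at most one. -/
def IsLeaf {V : Type} (T : SimpleGraph V) (v : V) : Prop :=
  (T.neighborSet v).ncard ≤ 1

/-- `(T, lam)` explains the graph `G` w.r.t. the exactly-`k`-relation, where
`f` identifies the vertices of `G` with the leaves of `T`. -/
def ExplainedBy {α V : Type} (G : SimpleGraph α) (T : SimpleGraph V) (hT : T.IsTree)
    (lam : Sym2 V → ℕ) (f : α → V) (k : ℕ) : Prop :=
  Function.Injective f ∧ (∀ v : V, (∃ a, f a = v) ↔ IsLeaf T v) ∧
    (∀ x y : α, G.Adj x y ↔ treeDist T hT lam (f x) (f y) = k)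

/-- `G` can be explained w.r.t. the exactly-`k`-relation by some finite edge-weighted tree. -/
def Explainable {α : Type} (G : SimpleGraph α) (k : ℕ) : Prop :=
  ∃ (V : Type) (_ : Finite V) (T : SimpleGraph V) (hT : T.IsTree) (lam : Sym2 V → ℕ)
    (f : α → V), ExplainedBy G T hT lam f k

/-- `G` can be explained w.r.t. the exactly-`k`-relation by a tree in which all pairs of
distinct leaves are at positive weighted distance (discrete 0-relation). -/
def ExplainableDiscrete {α : Type} (G : SimpleGraph α) (k : ℕ) : Prop :=
  ∃ (V : Type) (_ : Finite V) (T : SimpleGraph V) (hT : T.IsTree) (lam : Sym2 V → ℕ)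
    (f : α → V), ExplainedBy G T hT lam f k ∧
      ∀ x y : α, x ≠ y → treeDist T hT lam (f x) (f y) ≠ 0

section TreeMetric

variable {V : Type} [DecidableEq V] (T : SimpleGraph V) (hT : T.IsTree) (lam : Sym2 V → ℕ)

lemma treePath_isPath (x y : V) : (treePath T hT x y).IsPath :=
  (hT.existsUnique_path x y).choose_spec.1

lemma treePath_eq {x y : V} (p : T.Walk x y) (hp : p.IsPath) : treePath T hT x y = p :=
  ((hT.existsUnique_path x y).choose_spec.2 p hp).symm

lemma treePath_self (x : V) : treePath T hT x x = Walk.nil :=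
  treePath_eq T hT Walk.nil Walk.IsPath.nil

lemma mem_treePath_symm {x y : V} {e : Sym2 V} :
    e ∈ (treePath T hT x y).edges ↔ e ∈ (treePath T hT y x).edges := by
  have h : treePath T hT y x = (treePath T hT x y).reverse :=
    treePath_eq T hT _ ((treePath_isPath T hT x y).reverse)
  rw [h, Walk.edges_reverse, List.mem_reverse]

lemma treePath_step (x : V) {y w : V} (h : T.Adj y w) :
    (treePath T hT x w).edges = (treePath T hT x y).edges ++ [s(y, w)] ∨
    (treePath T hT x y).edges = (treePath T hT x w).edges ++ [s(y, w)] := by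
  have hp : (treePath T hT x y).IsPath := treePath_isPath T hT x y
  by_cases hw : w ∈ (treePath T hT x y).support
  · right
    have hq : treePath T hT x w = (treePath T hT x y).takeUntil w hw :=
      treePath_eq T hT _ (hp.takeUntil hw)
    have h1 : (Walk.cons h.symm (Walk.nil : T.Walk y y)).IsPath := by
      rw [Walk.cons_isPath_iff]
      refine ⟨Walk.IsPath.nil, ?_⟩
      simp [h.ne']
    have hr : (treePath T hT x y).dropUntil w hw = Walk.cons h.symm Walk.nil := by
      have h2 := treePath_eq T hT _ (hp.dropUntil hw)
      have h3 := treePath_eq T hT _ h1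
      rw [← h2, h3]
    have hts := (treePath T hT x y).take_spec hw
    calc (treePath T hT x y).edges
        = (((treePath T hT x y).takeUntil w hw).append
            ((treePath T hT x y).dropUntil w hw)).edges := by rw [hts]
      _ = ((treePath T hT x y).takeUntil w hw).edges ++
            ((treePath T hT x y).dropUntil w hw).edges := Walk.edges_append _ _
      _ = (treePath T hT x w).edges ++ [s(y, w)] := by
            rw [hq, hr]
            simp only [Walk.edges_cons, Walk.edges_nil]
            rw [Sym2.eq_swap]
  · left
    have hcp : ((treePath T hT x y).concat h).IsPath := by
      rw [← Walk.isPath_reverse_iff, Walk.reverse_concat, Walk.cons_isPath_iff]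
      refine ⟨hp.reverse, ?_⟩
      rwa [Walk.support_reverse, List.mem_reverse]
    have heq := treePath_eq T hT _ hcp
    rw [heq, Walk.edges_concat]
    exact List.concat_eq_append

lemma mem_treePath_step (x : V) {y w : V} (h : T.Adj y w) (e : Sym2 V) :
    e ∈ (treePath T hT x w).edges ↔
      Xor' (e ∈ (treePath T hT x y).edges) (e = s(y, w)) := by
  rcases treePath_step T hT x h with hc | hc
  · have hs : s(y, w) ∉ (treePath T hT x y).edges := by
      have hnd := (treePath_isPath T hT x w).edges_nodup
      rw [hc, List.nodup_append] at hnd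
      intro hmem
      exact hnd.2.2 _ hmem _ (List.mem_singleton_self _) rfl
    rw [hc]
    by_cases he : e = s(y, w)
    · subst he
      simp [Xor', hs]
    · simp [Xor', he, xor_def]
  · have hs : s(y, w) ∉ (treePath T hT x w).edges := by
      have hnd := (treePath_isPath T hT x y).edges_nodup
      rw [hc, List.nodup_append] at hnd
      intro hmem
      exact hnd.2.2 _ hmem _ (List.mem_singleton_self _) rfl
    rw [hc]
    by_cases he : e = s(y, w)
    · subst he
      simp [Xor', hs]
    · simp [Xor', he, xor_def]

lemma xor_xor_cancel {A B C : Prop} : Xor' (Xor' A C) (Xor' B C) ↔ Xor' A B := by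
  unfold Xor' Xor
  tauto

lemma mem_treePath_xor (x y z : V) (e : Sym2 V) :
    e ∈ (treePath T hT x z).edges ↔
      Xor' (e ∈ (treePath T hT x y).edges) (e ∈ (treePath T hT y z).edges) := by
  have main : ∀ (a b : V) (_ : T.Walk a b),
      e ∈ (treePath T hT x b).edges ↔
        Xor' (e ∈ (treePath T hT x a).edges) (e ∈ (treePath T hT a b).edges) := by
    intro a b q
    induction q with
    | nil =>
      simp [treePath_self, Xor', xor_def]
    | @cons a c b h q ih =>
      have h1 := mem_treePath_step T hT x h e
      have h2 := mem_treePath_step T hT b h e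
      have h3 : e ∈ (treePath T hT c b).edges ↔ e ∈ (treePath T hT b c).edges :=
        mem_treePath_symm T hT
      have h4 : e ∈ (treePath T hT a b).edges ↔ e ∈ (treePath T hT b a).edges :=
        mem_treePath_symm T hT
      rw [ih, h1, h3, h2, ← h4]
      exact xor_xor_cancel
  exact main y z (treePath T hT y z)

lemma split_compat {a b c d : V} {e e0 : Sym2 V}
    (hab : e ∈ (treePath T hT a b).edges) (hcd : e ∈ (treePath T hT c d).edges)
    (hbc : e0 ∈ (treePath T hT b c).edges)
    (h1 : e0 ∉ (treePath T hT a b).edges) (h2 : e0 ∉ (treePath T hT c d).edges) : False := by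
  revert hab hcd
  induction e using Sym2.ind with
  | _ u v =>
    intro hab hcd
    have hab' : s(u, v) ∈ (treePath T hT b a).edges := (mem_treePath_symm T hT).mp hab
    have hu1 : u ∈ (treePath T hT b a).support :=
      Walk.fst_mem_support_of_mem_edges _ hab'
    have hsub1 : (treePath T hT b u).edges ⊆ (treePath T hT b a).edges := by
      have heq : treePath T hT b u = (treePath T hT b a).takeUntil u hu1 :=
        treePath_eq T hT _ ((treePath_isPath T hT b a).takeUntil hu1)
      rw [heq]
      exact Walk.edges_takeUntil_subset _ hu1
    have hn1 : e0 ∉ (treePath T hT b u).edges := fun hx =>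
      h1 ((mem_treePath_symm T hT).mpr (hsub1 hx))
    have hu2 : u ∈ (treePath T hT c d).support :=
      Walk.fst_mem_support_of_mem_edges _ hcd
    have hsub2 : (treePath T hT c u).edges ⊆ (treePath T hT c d).edges := by
      have heq : treePath T hT c u = (treePath T hT c d).takeUntil u hu2 :=
        treePath_eq T hT _ ((treePath_isPath T hT c d).takeUntil hu2)
      rw [heq]
      exact Walk.edges_takeUntil_subset _ hu2
    have hn2 : e0 ∉ (treePath T hT c u).edges := fun hx => h2 (hsub2 hx)
    have hx := mem_treePath_xor T hT b u c e0
    have hsy : e0 ∈ (treePath T hT u c).edges ↔ e0 ∈ (treePath T hT c u).edges :=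
      mem_treePath_symm T hT
    unfold Xor' Xor at hx
    tauto

variable [Fintype V]

/-- Sum formulation of the tree distance. -/
noncomputable def DD (x y : V) : ℕ :=
  ∑ e : Sym2 V, if e ∈ (treePath T hT x y).edges then lam e else 0

/-- The total weight of edges common to the paths `x → y` and `y → z`. -/
noncomputable def JJ (x y z : V) : ℕ :=
  ∑ e : Sym2 V,
    if e ∈ (treePath T hT x y).edges ∧ e ∈ (treePath T hT y z).edges then lam e else 0

lemma DD_eq_treeDist (x y : V) : DD T hT lam x y = treeDist T hT lam x y := by
  unfold DD treeDist
  have hnd : (treePath T hT x y).edges.Nodup := (treePath_isPath T hT x y).edges_nodup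
  calc (∑ e : Sym2 V, if e ∈ (treePath T hT x y).edges then lam e else 0)
      = ∑ e ∈ (treePath T hT x y).edges.toFinset, lam e := by
        rw [← Finset.sum_filter]
        apply Finset.sum_congr
        · ext e
          simp
        · intro _ _; rfl
    _ = ((treePath T hT x y).edges.map lam).sum := List.sum_toFinset lam hnd

lemma DD_J (x y z : V) :
    DD T hT lam x y + DD T hT lam y z = DD T hT lam x z + 2 * JJ T hT lam x y z := by
  unfold DD JJ
  rw [← Finset.sum_add_distrib, Finset.mul_sum, ← Finset.sum_add_distrib]
  apply Finset.sum_congr rfl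
  intro e _
  have hx := mem_treePath_xor T hT x y z e
  by_cases h1 : e ∈ (treePath T hT x y).edges <;>
    by_cases h2 : e ∈ (treePath T hT y z).edges
  · have hz : e ∉ (treePath T hT x z).edges := by rw [hx]; simp [Xor', h1, h2]
    simp only [h1, h2, hz, if_true, if_false, and_self, if_neg, if_pos, not_false_iff]
    simp [hz]
    omega
  · have hz : e ∈ (treePath T hT x z).edges := by rw [hx]; simp [Xor', h1, h2]
    simp [h1, h2, hz]
  · have hz : e ∈ (treePath T hT x z).edges := by rw [hx]; simp [Xor', h1, h2]
    simp [h1, h2, hz]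
  · have hz : e ∉ (treePath T hT x z).edges := by rw [hx]; simp [Xor', h1, h2]
    simp [h1, h2, hz]

lemma btw_pointwise {x y z : V}
    (h : DD T hT lam x y + DD T hT lam y z = DD T hT lam x z) :
    ∀ e : Sym2 V, e ∈ (treePath T hT x y).edges → e ∈ (treePath T hT y z).edges →
      lam e = 0 := by
  have hJ := DD_J T hT lam x y z
  have hJ0 : JJ T hT lam x y z = 0 := by omega
  intro e h1 h2
  have := (Finset.sum_eq_zero_iff).mp hJ0 e (Finset.mem_univ e)
  simpa [h1, h2] using this

lemma exists_pos {x y : V} (h : DD T hT lam x y ≠ 0) :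
    ∃ e, e ∈ (treePath T hT x y).edges ∧ lam e ≠ 0 := by
  by_contra hc
  push_neg at hc
  apply h
  unfold DD
  apply Finset.sum_eq_zero
  intro e _
  by_cases he : e ∈ (treePath T hT x y).edges
  · simp [he, hc e he]
  · simp [he]

lemma btw_trans {a b c d : V}
    (h1 : DD T hT lam a b + DD T hT lam b c = DD T hT lam a c)
    (h2 : DD T hT lam b c + DD T hT lam c d = DD T hT lam b d)
    (hpos : DD T hT lam b c ≠ 0) :
    DD T hT lam a d = DD T hT lam a b + (DD T hT lam b c + DD T hT lam c d) := by
  have p1 := btw_pointwise T hT lam h1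
  have p2 := btw_pointwise T hT lam h2
  obtain ⟨e0, he0, hl0⟩ := exists_pos T hT lam hpos
  have he0ab : e0 ∉ (treePath T hT a b).edges := fun hx => hl0 (p1 e0 hx he0)
  have he0cd : e0 ∉ (treePath T hT c d).edges := fun hx => hl0 (p2 e0 he0 hx)
  unfold DD
  rw [← Finset.sum_add_distrib, ← Finset.sum_add_distrib]
  apply Finset.sum_congr rfl
  intro e _
  by_cases hl : lam e = 0
  · rw [hl]; simp
  have x1 := mem_treePath_xor T hT a b d e
  have x2 := mem_treePath_xor T hT b c d e
  by_cases m1 : e ∈ (treePath T hT a b).edges <;>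
    by_cases m2 : e ∈ (treePath T hT b c).edges <;>
      by_cases m3 : e ∈ (treePath T hT c d).edges
  · exact absurd (p1 e m1 m2) hl
  · exact absurd (p1 e m1 m2) hl
  · exact absurd (split_compat T hT m1 m3 he0 he0ab he0cd) not_false
  · -- m1 true, m2 false, m3 false
    have hbd : e ∉ (treePath T hT b d).edges := by
      rw [x2]; simp [Xor', m2, m3]
    have had : e ∈ (treePath T hT a d).edges := by
      rw [x1]; simp [Xor', m1, hbd]
    simp [m1, m2, m3, had]
  · exact absurd (p2 e m2 m3) hl
  · -- m1 false, m2 true, m3 false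
    have hbd : e ∈ (treePath T hT b d).edges := by
      rw [x2]; simp [Xor', m2, m3]
    have had : e ∈ (treePath T hT a d).edges := by
      rw [x1]; simp [Xor', m1, hbd]
    simp [m1, m2, m3, had]
  · -- m1 false, m2 false, m3 true
    have hbd : e ∈ (treePath T hT b d).edges := by
      rw [x2]; simp [Xor', m2, m3]
    have had : e ∈ (treePath T hT a d).edges := by
      rw [x1]; simp [Xor', m1, hbd]
    simp [m1, m2, m3, had]
  · -- all false
    have hbd : e ∉ (treePath T hT b d).edges := by
      rw [x2]; simp [Xor', m2, m3]
    have had : e ∉ (treePath T hT a d).edges := by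
      rw [x1]; simp [Xor', m1, hbd]
    simp [m1, m2, m3, had]

end TreeMetric

/-- A graph explainable w.r.t. the exactly-2-relation with all leaf distances positive
has no induced C_4, no induced K_4 − e, and is chordal (no induced cycle of length ≥ 4). -/
theorem stmt14 {α : Type} (G : SimpleGraph α) (hG : ExplainableDiscrete G 2) :
    IsEmpty (cycleGraph 4 ↪g G) ∧
      IsEmpty (((⊤ : SimpleGraph (Fin 4)).deleteEdges {s(0, 1)}) ↪g G) ∧
      ∀ n, 4 ≤ n → IsEmpty (cycleGraph n ↪g G) := by
  obtain ⟨V, hfin, T, hT, lam, f, ⟨hinj, hleaf, hadjG⟩, hdisc⟩ := hG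
  haveI : Finite V := hfin
  letI : Fintype V := Fintype.ofFinite V
  letI : DecidableEq V := Classical.decEq V
  have hadj : ∀ x y : α, G.Adj x y ↔ DD T hT lam (f x) (f y) = 2 := by
    intro x y
    rw [hadjG, DD_eq_treeDist]
  have hdd : ∀ x y : α, x ≠ y → DD T hT lam (f x) (f y) ≠ 0 := by
    intro x y hxy
    rw [DD_eq_treeDist]
    exact hdisc x y hxy
  have key : ∀ n, 4 ≤ n → IsEmpty (cycleGraph n ↪g G) := by
    intro n hn
    constructor
    intro emb
    -- vertices
    have hnpos : 0 < n := by omega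
    set g : ℕ → V := fun k => if h : k < n then f (emb ⟨k, h⟩) else f (emb ⟨0, hnpos⟩)
      with hgdef
    have hgval : ∀ (a : ℕ) (ha : a < n), g a = f (emb ⟨a, ha⟩) := by
      intro a ha
      simp only [hgdef, dif_pos ha]
    have hge : ∀ (a b : ℕ) (ha : a < n) (hb : b < n), a ≠ b →
        DD T hT lam (g a) (g b) ≠ 0 := by
      intro a b ha hb hab
      rw [hgval a ha, hgval b hb]
      apply hdd
      intro hcon
      apply hab
      have := emb.injective hcon
      exact congrArg Fin.val this
    have hadj2 : ∀ (a b : ℕ) (ha : a < n) (hb : b < n),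
        (cycleGraph n).Adj ⟨a, ha⟩ ⟨b, hb⟩ → DD T hT lam (g a) (g b) = 2 := by
      intro a b ha hb hA
      rw [hgval a ha, hgval b hb, ← hadj]
      exact emb.map_adj_iff.mpr hA
    have hnadj2 : ∀ (a b : ℕ) (ha : a < n) (hb : b < n),
        ¬ (cycleGraph n).Adj ⟨a, ha⟩ ⟨b, hb⟩ → DD T hT lam (g a) (g b) ≠ 2 := by
      intro a b ha hb hA hc
      rw [hgval a ha, hgval b hb] at hc
      exact hA (emb.map_adj_iff.mp ((hadj _ _).mpr hc))
    -- adjacency in the cycle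
    have hadjS : ∀ (a : ℕ) (ha : a < n) (hb : a + 1 < n),
        (cycleGraph n).Adj ⟨a, ha⟩ ⟨a + 1, hb⟩ := by
      intro a ha hb
      rw [cycleGraph_adj']
      right
      rw [Fin.sub_def]
      simp only
      have harith : (n - a) + (a + 1) = n + 1 := by omega
      rw [harith, Nat.add_mod_left]
      exact Nat.mod_eq_of_lt (by omega)
    have hadjW : (cycleGraph n).Adj ⟨0, hnpos⟩ ⟨n - 1, by omega⟩ := by
      rw [cycleGraph_adj']
      left
      rw [Fin.sub_def]
      simp only
      have harith : (n - (n - 1)) + 0 = 1 := by omega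
      rw [harith]
      exact Nat.mod_eq_of_lt (by omega)
    have hnadjD : ∀ (a : ℕ) (ha : a < n) (hb : a + 2 < n),
        ¬ (cycleGraph n).Adj ⟨a, ha⟩ ⟨a + 2, hb⟩ := by
      intro a ha hb
      rw [cycleGraph_adj']
      rintro (h | h)
      · rw [Fin.sub_def] at h
        simp only at h
        have harith : (n - (a + 2)) + a = n - 2 := by omega
        rw [harith, Nat.mod_eq_of_lt (show n - 2 < n by omega)] at h
        omega
      · rw [Fin.sub_def] at h
        simp only at h
        have harith : (n - a) + (a + 2) = n + 2 := by omega
        rw [harith, Nat.add_mod_left, Nat.mod_eq_of_lt (show 2 < n by omega)] at h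
        omega
    -- the distance between second neighbors is 4
    have hsn : ∀ (a : ℕ), a + 2 < n →
        DD T hT lam (g a) (g (a + 2)) = 4 := by
      intro a ha
      have e1 : DD T hT lam (g a) (g (a + 1)) = 2 :=
        hadj2 a (a + 1) (by omega) (by omega) (hadjS a (by omega) (by omega))
      have e2 : DD T hT lam (g (a + 1)) (g (a + 2)) = 2 :=
        hadj2 (a + 1) (a + 2) (by omega) (by omega) (hadjS (a + 1) (by omega) (by omega))
      have hJ := DD_J T hT lam (g a) (g (a + 1)) (g (a + 2))
      have hne0 : DD T hT lam (g a) (g (a + 2)) ≠ 0 :=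
        hge a (a + 2) (by omega) (by omega) (by omega)
      have hne2 : DD T hT lam (g a) (g (a + 2)) ≠ 2 :=
        hnadj2 a (a + 2) (by omega) (by omega) (hnadjD a (by omega) (by omega))
      omega
    -- chain: distance from vertex 0 grows linearly
    have chain : ∀ k, 1 ≤ k → k ≤ n - 1 →
        DD T hT lam (g 0) (g k) = 2 * k := by
      intro k
      induction k using Nat.strong_induction_on with
      | _ k ih =>
        intro hk1 hkn1
        match k, hk1 with
        | 1, _ =>
          have := hadj2 0 1 hnpos (by omega) (hadjS 0 hnpos (by omega))
          omega
        | 2, _ =>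
          have h4 : DD T hT lam (g 0) (g 2) = 4 := hsn 0 (by omega)
          omega
        | (m + 3), _ =>
          have ihm1 := ih (m + 1) (by omega) (by omega) (by omega)
          have ihm2 := ih (m + 2) (by omega) (by omega) (by omega)
          have e1 : DD T hT lam (g (m + 1)) (g (m + 2)) = 2 :=
            hadj2 (m + 1) (m + 2) (by omega) (by omega)
              (hadjS (m + 1) (by omega) (by omega))
          have e2 : DD T hT lam (g (m + 2)) (g (m + 3)) = 2 :=
            hadj2 (m + 2) (m + 3) (by omega) (by omega)
              (hadjS (m + 2) (by omega) (by omega))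
          have e3 : DD T hT lam (g (m + 1)) (g (m + 3)) = 4 :=
            hsn (m + 1) (by omega)
          have hb1 : DD T hT lam (g 0) (g (m + 1)) +
              DD T hT lam (g (m + 1)) (g (m + 2)) =
              DD T hT lam (g 0) (g (m + 2)) := by omega
          have hb2 : DD T hT lam (g (m + 1)) (g (m + 2)) +
              DD T hT lam (g (m + 2)) (g (m + 3)) =
              DD T hT lam (g (m + 1)) (g (m + 3)) := by omega
          have hpos : DD T hT lam (g (m + 1)) (g (m + 2)) ≠ 0 := by omega
          have := btw_trans T hT lam hb1 hb2 hpos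
          omega
    -- contradiction with the wrap-around edge
    have h1 := chain (n - 1) (by omega) (by omega)
    have h2 : DD T hT lam (g 0) (g (n - 1)) = 2 :=
      hadj2 0 (n - 1) hnpos (by omega) hadjW
    omega
  refine ⟨key 4 (le_refl 4), ?_, key⟩
  -- K4 minus an edge
  constructor
  intro emb
  set z : Fin 4 → V := fun i => f (emb i) with hz
  have hKadj : ∀ i j : Fin 4, i ≠ j → s(i, j) ≠ s(0, 1) →
      DD T hT lam (z i) (z j) = 2 := by
    intro i j hij hs
    rw [← hadj]
    apply emb.map_adj_iff.mpr
    rw [SimpleGraph.deleteEdges_adj]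
    exact ⟨hij, by simpa using hs⟩
  have hKge : ∀ i j : Fin 4, i ≠ j → DD T hT lam (z i) (z j) ≠ 0 := by
    intro i j hij
    apply hdd
    intro hcon
    exact hij (emb.injective hcon)
  have hKnadj : DD T hT lam (z 0) (z 1) ≠ 2 := by
    intro hc
    have : (((⊤ : SimpleGraph (Fin 4)).deleteEdges {s(0, 1)})).Adj 0 1 :=
      emb.map_adj_iff.mp ((hadj _ _).mpr hc)
    rw [SimpleGraph.deleteEdges_adj] at this
    simp at this
  have d02 : DD T hT lam (z 0) (z 2) = 2 := hKadj 0 2 (by decide) (by decide)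
  have d21 : DD T hT lam (z 2) (z 1) = 2 := hKadj 2 1 (by decide) (by decide)
  have d03 : DD T hT lam (z 0) (z 3) = 2 := hKadj 0 3 (by decide) (by decide)
  have d31 : DD T hT lam (z 3) (z 1) = 2 := hKadj 3 1 (by decide) (by decide)
  have d20 : DD T hT lam (z 2) (z 0) = 2 := hKadj 2 0 (by decide) (by decide)
  have d23 : DD T hT lam (z 2) (z 3) = 2 := hKadj 2 3 (by decide) (by decide)
  -- distance between 0 and 1 is 4
  have d01 : DD T hT lam (z 0) (z 1) = 4 := by
    have hJ := DD_J T hT lam (z 0) (z 2) (z 1)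
    have hne0 : DD T hT lam (z 0) (z 1) ≠ 0 := hKge 0 1 (by decide)
    omega
  -- betweenness of 2 and of 3 on the path from 0 to 1
  have hb1 : DD T hT lam (z 0) (z 2) + DD T hT lam (z 2) (z 1) =
      DD T hT lam (z 0) (z 1) := by omega
  have hb2 : DD T hT lam (z 0) (z 3) + DD T hT lam (z 3) (z 1) =
      DD T hT lam (z 0) (z 1) := by omega
  have p1 := btw_pointwise T hT lam hb1
  have p2 := btw_pointwise T hT lam hb2
  -- the common part of paths 2→0 and 0→3 has weight 1
  have hJ203 : JJ T hT lam (z 2) (z 0) (z 3) = 1 := by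
    have hJ := DD_J T hT lam (z 2) (z 0) (z 3)
    omega
  -- split the sum for D(0,3): overlap with path(2,0) versus rest
  have split3 : DD T hT lam (z 0) (z 3) = JJ T hT lam (z 2) (z 0) (z 3) +
      ∑ e : Sym2 V, (if e ∈ (treePath T hT (z 0) (z 3)).edges ∧
        e ∉ (treePath T hT (z 2) (z 0)).edges then lam e else 0) := by
    unfold DD JJ
    rw [← Finset.sum_add_distrib]
    apply Finset.sum_congr rfl
    intro e _
    by_cases h1 : e ∈ (treePath T hT (z 0) (z 3)).edges <;>
      by_cases h2 : e ∈ (treePath T hT (z 2) (z 0)).edges <;>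
        simp [h1, h2]
  have split2 : DD T hT lam (z 0) (z 2) = JJ T hT lam (z 2) (z 0) (z 3) +
      ∑ e : Sym2 V, (if e ∈ (treePath T hT (z 0) (z 2)).edges ∧
        e ∉ (treePath T hT (z 0) (z 3)).edges then lam e else 0) := by
    unfold DD JJ
    rw [← Finset.sum_add_distrib]
    apply Finset.sum_congr rfl
    intro e _
    have hsym : e ∈ (treePath T hT (z 2) (z 0)).edges ↔
        e ∈ (treePath T hT (z 0) (z 2)).edges := mem_treePath_symm T hT
    by_cases h1 : e ∈ (treePath T hT (z 0) (z 2)).edges <;>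
      by_cases h2 : e ∈ (treePath T hT (z 0) (z 3)).edges <;>
        simp [h1, h2, hsym]
  -- existence of a positive edge on path(0,3) avoiding path(2,0)
  have hex0 : ∃ e0, (e0 ∈ (treePath T hT (z 0) (z 3)).edges ∧
      e0 ∉ (treePath T hT (z 2) (z 0)).edges) ∧ lam e0 ≠ 0 := by
    by_contra hc
    push_neg at hc
    have : (∑ e : Sym2 V, (if e ∈ (treePath T hT (z 0) (z 3)).edges ∧
        e ∉ (treePath T hT (z 2) (z 0)).edges then lam e else 0)) = 0 := by
      apply Finset.sum_eq_zero
      intro e _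
      by_cases he : e ∈ (treePath T hT (z 0) (z 3)).edges ∧
          e ∉ (treePath T hT (z 2) (z 0)).edges
      · simp [he, hc e he]
      · simp [he]
    omega
  have hex1 : ∃ e1, (e1 ∈ (treePath T hT (z 0) (z 2)).edges ∧
      e1 ∉ (treePath T hT (z 0) (z 3)).edges) ∧ lam e1 ≠ 0 := by
    by_contra hc
    push_neg at hc
    have : (∑ e : Sym2 V, (if e ∈ (treePath T hT (z 0) (z 2)).edges ∧
        e ∉ (treePath T hT (z 0) (z 3)).edges then lam e else 0)) = 0 := by
      apply Finset.sum_eq_zero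
      intro e _
      by_cases he : e ∈ (treePath T hT (z 0) (z 2)).edges ∧
          e ∉ (treePath T hT (z 0) (z 3)).edges
      · simp [he, hc e he]
      · simp [he]
    omega
  obtain ⟨e0, ⟨he03, he020⟩, hl0⟩ := hex0
  obtain ⟨e1, ⟨he102, he103⟩, hl1⟩ := hex1
  -- e0 is not on path(3,1)
  have he031 : e0 ∉ (treePath T hT (z 3) (z 1)).edges := fun hx =>
    hl0 (p2 e0 he03 hx)
  -- e1 is not on path(2,1), hence on path(0,1), hence on path(3,1)
  have he121 : e1 ∉ (treePath T hT (z 2) (z 1)).edges := fun hx =>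
    hl1 (p1 e1 he102 hx)
  have he101 : e1 ∈ (treePath T hT (z 0) (z 1)).edges := by
    have x1 := mem_treePath_xor T hT (z 0) (z 2) (z 1) e1
    rw [x1]
    exact Or.inl ⟨he102, he121⟩
  have he131 : e1 ∈ (treePath T hT (z 3) (z 1)).edges := by
    have x2 := mem_treePath_xor T hT (z 0) (z 3) (z 1) e1
    unfold Xor' Xor at x2
    tauto
  -- apply split compatibility with (a,b,c,d) = (1,3,0,2)
  exact split_compat T hT
    ((mem_treePath_symm T hT).mp he131)
    he102
    ((mem_treePath_symm T hT).mp he03)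
    (fun hx => he031 ((mem_treePath_symm T hT).mp hx))
    ((fun hx => he020 ((mem_treePath_symm T hT).mp hx)))
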